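/- For every integer m ≥ 1, all ξ, F ∈ ℝ, every η ∈ ℝ^m, every f_x ∈ ℂ, and every f_y ∈ ℂ^m: (ξ² + F²)·|f_x|² − 2·Re((ξ − i·F)·conj(f_x)·⟨η, f_y⟩) + 2·|η|²·|f_y|² − |⟨η, f_y⟩|² ≥ 0. Equivalently, the Hermitian block matrix [[ξ² + F², −(ξ − iF)·ηᵀ], [−(ξ + iF)·η, 2|η|²·Id − η·ηᵀ]] acting on ℂ × ℂ^m is positive semidefinite. -/

import Mathlib

open scoped RealInnerProductSpace ComplexConjugate
open Complex

/-- The pairing `⟨η, v⟩ = ∑ j, η j * v j` of a real vector `η` with a complex vector `v`. -/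
noncomputable def cpair {m : ℕ} (η : EuclideanSpace ℝ (Fin m))
    (v : EuclideanSpace ℂ (Fin m)) : ℂ :=
  ∑ j, (η j : ℂ) * v j

lemma cpair_cs {m : ℕ} (η : EuclideanSpace ℝ (Fin m)) (v : EuclideanSpace ℂ (Fin m)) :
    ‖cpair η v‖ ≤ ‖η‖ * ‖v‖ := by
  set ηc : EuclideanSpace ℂ (Fin m) := WithLp.toLp 2 (fun j => (η j : ℂ)) with hηc
  have h1 : cpair η v = inner ℂ ηc v := by
    simp [cpair, PiLp.inner_apply, RCLike.inner_apply, hηc, Complex.conj_ofReal, mul_comm]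
  have h2 : ‖ηc‖ = ‖η‖ := by
    simp [EuclideanSpace.norm_eq, hηc]
  rw [h1, ← h2]
  exact norm_inner_le_norm ηc v

theorem stmt_6 (m : ℕ) (hm : 1 ≤ m)
    (ξ F : ℝ) (η : EuclideanSpace ℝ (Fin m))
    (f_x : ℂ) (f_y : EuclideanSpace ℂ (Fin m)) :
    0 ≤ (ξ ^ 2 + F ^ 2) * ‖f_x‖ ^ 2
        - 2 * (((ξ : ℂ) - I * (F : ℂ)) * conj f_x * cpair η f_y).re
        + 2 * ‖η‖ ^ 2 * ‖f_y‖ ^ 2 - ‖cpair η f_y‖ ^ 2 := by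
  set b := ‖cpair η f_y‖ with hb
  set a := ‖(ξ : ℂ) - I * (F : ℂ)‖ with ha
  have hcs : b ≤ ‖η‖ * ‖f_y‖ := cpair_cs η f_y
  have hb0 : 0 ≤ b := norm_nonneg _
  have ha0 : 0 ≤ a := norm_nonneg _
  have ha2 : a ^ 2 = ξ ^ 2 + F ^ 2 := by
    rw [ha, Complex.sq_norm]
    simp [Complex.normSq_apply]
    ring
  have hre : (((ξ : ℂ) - I * (F : ℂ)) * conj f_x * cpair η f_y).re ≤ a * ‖f_x‖ * b := by
    calc (((ξ : ℂ) - I * (F : ℂ)) * conj f_x * cpair η f_y).re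
        ≤ ‖((ξ : ℂ) - I * (F : ℂ)) * conj f_x * cpair η f_y‖ :=
          Complex.re_le_norm _
      _ = a * ‖f_x‖ * b := by
          rw [norm_mul, norm_mul]
          simp [ha, hb, Complex.norm_conj]
  have hfx : (0:ℝ) ≤ ‖f_x‖ := norm_nonneg _
  have hfy : (0:ℝ) ≤ ‖f_y‖ := norm_nonneg _
  have hη : (0:ℝ) ≤ ‖η‖ := norm_nonneg _
  nlinarith [sq_nonneg (a * ‖f_x‖ - b), mul_le_mul hcs hcs hb0 (mul_nonneg hη hfy),
    sq_nonneg (a * ‖f_x‖), sq_nonneg b]
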